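/- arXiv:1208.1412 — 3 statements merged into one kernel-verified Lean document; each statement's English description precedes it below -/
import Mathlib

section
/- Let p be a prime with p ≡ 1 (mod 48). Then p is representable by x²+64y² if and only if p is representable by x²+288y². Let p be a prime with p ≡ 25 (mod 48). Then p is representable by exactly one of the quadratic forms x²+64y² and x²+288y². -/
open scoped NumberTheorySymbols


private theorem bmod_sq_le (x : ℤ) (m : ℕ) (hm : 0 < m) : 4 * (Int.bmod x m)^2 ≤ (m:ℤ)^2 := by
  have h1 := Int.le_bmod (x := x) hm
  have h2 := Int.bmod_lt (x := x) hm
  have h3 : -((m:ℤ)/2) ≤ Int.bmod x m := h1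
  have h4 : Int.bmod x m ≤ (m:ℤ)/2 := by omega
  have h5 : 2 * ((m:ℤ)/2) ≤ (m:ℤ) := by omega
  nlinarith [sq_nonneg ((m:ℤ)/2)]

private theorem descent (p : ℕ) (hp : p.Prime) :
    ∀ m : ℕ, 0 < m → m < p → (∃ c d : ℤ, (m : ℤ) * p = c ^ 2 + 2 * d ^ 2) →
      ∃ c d : ℤ, (p : ℤ) = c ^ 2 + 2 * d ^ 2 := by
  intro m
  induction m using Nat.strong_induction_on with
  | _ m ih =>
    intro hm0 hmp h
    obtain ⟨c, d, hcd⟩ := h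
    rcases eq_or_lt_of_le (show 1 ≤ m from hm0) with h1 | h1
    · exact ⟨c, d, by rw [show ((p:ℤ)) = (m:ℤ) * p by rw [← h1]; push_cast; ring, hcd]⟩
    · set c' := Int.bmod c m with hc'def
      set d' := Int.bmod d m with hd'def
      have hmc : c ≡ c' [ZMOD (m:ℤ)] := (Int.bmod_emod (x := c) (m := m)).symm
      have hmd : d ≡ d' [ZMOD (m:ℤ)] := (Int.bmod_emod (x := d) (m := m)).symm
      have hdvdN : (m:ℤ) ∣ c'^2 + 2*d'^2 := by
        have h0 : c^2 + 2*d^2 ≡ c'^2 + 2*d'^2 [ZMOD (m:ℤ)] :=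
          (hmc.pow 2).add ((hmd.pow 2).mul_left 2)
        have h0' : (m:ℤ) ∣ c^2 + 2*d^2 := ⟨p, hcd.symm⟩
        exact by simpa using dvd_add h0.dvd h0'
      obtain ⟨W, hW⟩ := hdvdN
      have hc2 := bmod_sq_le c m hm0
      have hd2 := bmod_sq_le d m hm0
      have hppos : (0:ℤ) < p := by exact_mod_cast hp.pos
      have hmpos : (0:ℤ) < m := by exact_mod_cast hm0
      have hWnn : 0 ≤ W := by nlinarith [sq_nonneg c', sq_nonneg d']
      have hWlt : W < m := by nlinarith
      rcases eq_or_lt_of_le hWnn with hW0 | hWpos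
      · -- W = 0 : then c' = d' = 0, m ∣ c, d
        have hN0 : c'^2 + 2*d'^2 = 0 := by rw [hW, ← hW0]; ring
        have hc0 : c' = 0 := by nlinarith [sq_nonneg c', sq_nonneg d']
        have hd0 : d' = 0 := by nlinarith [sq_nonneg c', sq_nonneg d']
        obtain ⟨u, hu⟩ : (m:ℤ) ∣ c := by
          have := hmc.dvd; rw [hc0, zero_sub] at this
          exact dvd_neg.mp this
        obtain ⟨v, hv⟩ : (m:ℤ) ∣ d := by
          have := hmd.dvd; rw [hd0, zero_sub] at this
          exact dvd_neg.mp this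
        have hdvdp : (m:ℤ) ∣ (p:ℤ) := by
          refine ⟨u^2 + 2*v^2, ?_⟩
          have : (m:ℤ) * ((m:ℤ) * (u^2+2*v^2)) = (m:ℤ) * p := by
            rw [hcd, hu, hv]; ring
          exact (mul_left_cancel₀ (ne_of_gt hmpos) this).symm
        have : m ∣ p := Int.natCast_dvd_natCast.mp hdvdp
        rcases (Nat.Prime.eq_one_or_self_of_dvd hp m this) with h' | h' <;> omega
      · -- 0 < W : descent step
        have hme : (m:ℤ) ∣ c*c' + 2*d*d' := by
          have h0 : c*c' + 2*(d*d') ≡ c'*c' + 2*(d'*d') [ZMOD (m:ℤ)] :=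
            (hmc.mul_right c').add (((hmd.mul_right d')).mul_left 2)
          have h0' : (m:ℤ) ∣ c'*c' + 2*(d'*d') := by
            have : c'*c' + 2*(d'*d') = c'^2 + 2*d'^2 := by ring
            rw [this]; exact ⟨W, hW⟩
          have := dvd_sub h0' h0.dvd
          have h2 : c'*c' + 2*(d'*d') - (c'*c' + 2*(d'*d') - (c*c' + 2*(d*d'))) = c*c' + 2*d*d' := by ring
          rwa [h2] at this
        have hmf : (m:ℤ) ∣ c*d' - d*c' := by
          have h0 : c*d' - d*c' ≡ c'*d' - d'*c' [ZMOD (m:ℤ)] :=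
            (hmc.mul_right d').sub (hmd.mul_right c')
          have h0' : (m:ℤ) ∣ c'*d' - d'*c' := by
            have h2 : c'*d' - d'*c' = 0 := by ring
            rw [h2]; exact dvd_zero _
          have := dvd_sub h0' h0.dvd
          have h2 : c'*d' - d'*c' - (c'*d' - d'*c' - (c*d' - d*c')) = c*d' - d*c' := by ring
          rwa [h2] at this
        obtain ⟨e0, he0⟩ := hme
        obtain ⟨f0, hf0⟩ := hmf
        have hkey : (W.toNat : ℤ) * p = e0^2 + 2*f0^2 := by
          have hWt : (W.toNat : ℤ) = W := Int.toNat_of_nonneg hWnn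
          rw [hWt]
          have hsq : (m:ℤ)^2 * (W * p) = (m:ℤ)^2 * (e0^2 + 2*f0^2) := by
            have hid : (c^2+2*d^2) * (c'^2+2*d'^2) = (c*c'+2*d*d')^2 + 2*(c*d'-d*c')^2 := by ring
            calc (m:ℤ)^2 * (W * p) = ((m:ℤ)*p) * ((m:ℤ)*W) := by ring
            _ = (c^2+2*d^2) * (c'^2+2*d'^2) := by rw [← hcd, ← hW]
            _ = (c*c'+2*d*d')^2 + 2*(c*d'-d*c')^2 := hid
            _ = (m:ℤ)^2 * (e0^2 + 2*f0^2) := by rw [he0, hf0]; ring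
          exact mul_left_cancel₀ (by positivity) hsq
        refine ih W.toNat ?_ ?_ ?_ ⟨e0, f0, hkey⟩
        · omega
        · omega
        · have : W.toNat < m := by omega
          omega

private theorem exists_sq_add_two_sq (p : ℕ) (hp : p.Prime) (h8 : p % 8 = 1) :
    ∃ c d : ℤ, (p:ℤ) = c ^ 2 + 2 * d ^ 2 := by
  haveI : Fact p.Prime := ⟨hp⟩
  have hp2 : p ≠ 2 := by omega
  have hsq : IsSquare (-2 : ZMod p) := (ZMod.exists_sq_eq_neg_two_iff hp2).mpr (Or.inl h8)
  obtain ⟨s, hs⟩ := hsq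
  set t : ℤ := Int.bmod (s.val) p with htdef
  have ht : ((t : ℤ) : ZMod p) = s := by
    have h1 : t ≡ (s.val : ℤ) [ZMOD (p:ℤ)] := Int.bmod_emod (x := (s.val:ℤ)) (m := p)
    have h2 := (ZMod.intCast_eq_intCast_iff _ _ _).mpr h1
    rw [h2]; push_cast; simp [ZMod.natCast_val, ZMod.cast_id]
  have hdvd : (p:ℤ) ∣ t^2 + 2 := by
    rw [← ZMod.intCast_zmod_eq_zero_iff_dvd]
    push_cast
    rw [sq, ht, ← hs]; ring
  obtain ⟨m, hm⟩ := hdvd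
  have hppos : (0:ℤ) < p := by exact_mod_cast hp.pos
  have hp17 : (9:ℤ) ≤ p := by
    have h2le := hp.two_le
    exact_mod_cast (by omega : 9 ≤ p)
  have htb : 4 * t^2 ≤ (p:ℤ)^2 := by
    have h1 := Int.le_bmod (x := (s.val:ℤ)) hp.pos
    have h2 := Int.bmod_lt (x := (s.val:ℤ)) hp.pos
    rw [← htdef] at h1 h2
    have h4 : t ≤ (p:ℤ)/2 := by omega
    have h3 : -((p:ℤ)/2) ≤ t := h1
    have h5 : 2 * ((p:ℤ)/2) ≤ (p:ℤ) := by omega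
    nlinarith [sq_nonneg ((p:ℤ)/2)]
  have hmpos : 0 < m := by nlinarith [sq_nonneg t]
  have hmlt : m < p := by nlinarith
  refine descent p hp m.toNat (by omega) (by omega) ⟨t, 1, ?_⟩
  have : (m.toNat : ℤ) = m := Int.toNat_of_nonneg (le_of_lt hmpos)
  rw [this]; rw [mul_comm] at hm; rw [← hm]; ring



private theorem int_odd_sq {a : ℤ} (h : a % 2 = 1) : a^2 % 2 = 1 := by
  obtain ⟨k, rfl⟩ : ∃ k, a = 2*k+1 := ⟨a/2, by omega⟩
  have : (2*k+1)^2 = 2*(2*k^2+2*k)+1 := by ring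
  omega

private theorem int_even_sq {a : ℤ} (h : a % 2 = 0) : a^2 % 4 = 0 := by
  obtain ⟨k, rfl⟩ : ∃ k, a = 2*k := ⟨a/2, by omega⟩
  have : (2*k)^2 = 4*k^2 := by ring
  omega


private theorem small_k {P k s : ℤ} (hP : 0 < P) (h : P^2 = (P*k)^2 + s) (hs : 0 ≤ s) :
    k = 0 ∨ (s = 0 ∧ (k = 1 ∨ k = -1)) := by
  have hP2 : 0 < P^2 := by positivity
  have h1 : P^2*(k^2-1) ≤ 0 := by nlinarith
  have h2 : k^2 ≤ 1 := by nlinarith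
  have h3 : -1 ≤ k := by nlinarith [sq_nonneg (k+1)]
  have h4 : k ≤ 1 := by nlinarith [sq_nonneg (k-1)]
  interval_cases k
  · right; constructor
    · nlinarith
    · right; rfl
  · left; rfl
  · right; constructor
    · nlinarith
    · left; rfl

private theorem uniq1_aux {p : ℕ} (hp : p.Prime) {a b x y : ℤ}
    (h1 : (p:ℤ) = a^2 + b^2) (h2 : (p:ℤ) = x^2 + y^2)
    (e : (a*y)^2 = (b*x)^2) : b^2 = y^2 := by
  have hp0 : (p:ℤ) ≠ 0 := by exact_mod_cast hp.ne_zero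
  have h0 : (p:ℤ) * (y^2 - b^2) = 0 := by linear_combination y^2*h1 - b^2*h2 + e
  rcases mul_eq_zero.mp h0 with h | h
  · exact absurd h hp0
  · linarith

private theorem uniq1 {p : ℕ} (hp : p.Prime) (hodd : p % 2 = 1) {a b x y : ℤ}
    (h1 : (p:ℤ) = a^2 + b^2) (h2 : (p:ℤ) = x^2 + y^2)
    (ha : a % 2 = 1) (hx : x % 2 = 1) : b^2 = y^2 := by
  have hpi : Prime (p:ℤ) := Int.prime_iff_natAbs_prime.mpr (by simpa using hp)
  have hppos : (0:ℤ) < p := by exact_mod_cast hp.pos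
  have hb : b % 2 = 0 := by
    rcases Int.emod_two_eq b with h | h
    · exact h
    · exfalso
      have e1 := int_odd_sq ha
      have e2 := int_odd_sq h
      have : (p:ℤ) % 2 = 0 := by omega
      omega
  have hy : y % 2 = 0 := by
    rcases Int.emod_two_eq y with h | h
    · exact h
    · exfalso
      have e1 := int_odd_sq hx
      have e2 := int_odd_sq h
      have : (p:ℤ) % 2 = 0 := by omega
      omega
  -- parity contradiction helper : a*x = ± b*y impossible
  have hcontra : ∀ u v : ℤ, (p:ℤ) = u^2 + v^2 → u % 2 = 0 → v % 2 = 0 → False := by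
    intro u v huv hu hv
    have e1 := int_even_sq hu
    have e2 := int_even_sq hv
    have : (p:ℤ) % 4 = 0 ∨ (p:ℤ) % 4 = 1 ∨ (p:ℤ) % 4 = 2 ∨ (p:ℤ) % 4 = 3 := by omega
    have hpo : (p:ℤ) % 2 = 1 := by omega
    omega
  have hkey : (p:ℤ) ∣ (a*x + b*y) * (a*x - b*y) := ⟨a^2 - y^2, by linear_combination y^2*h1 - a^2*h2⟩
  rcases hpi.dvd_mul.mp hkey with hd | hd
  · obtain ⟨k, hk⟩ := hd
    have hsq : (p:ℤ)^2 = ((p:ℤ)*k)^2 + (a*y-b*x)^2 := by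
      rw [← hk]; linear_combination ((p:ℤ))*h2 + (x^2+y^2)*h1
    rcases small_k hppos hsq (sq_nonneg _) with rfl | ⟨hs0, _⟩
    · exfalso
      have hax : a*x = -(b*y) := by
        have := hk; simp at this; linarith
      have e : (a*x)^2 = (b*y)^2 := by rw [hax]; ring
      have h0 : (p:ℤ) * ((p:ℤ) - b^2 - y^2) = 0 := by
        linear_combination ((p:ℤ) - y^2)*h1 + a^2*h2 + e
      rcases mul_eq_zero.mp h0 with h | h
      · exact absurd h (by exact_mod_cast hp.ne_zero)
      · exact hcontra b y (by linarith) hb hy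
    · have h0' : a*y = b*x := by nlinarith [hs0]
      exact uniq1_aux hp h1 h2 (by rw [h0'])
  · obtain ⟨k, hk⟩ := hd
    have hsq : (p:ℤ)^2 = ((p:ℤ)*k)^2 + (a*y+b*x)^2 := by
      rw [← hk]; linear_combination ((p:ℤ))*h2 + (x^2+y^2)*h1
    rcases small_k hppos hsq (sq_nonneg _) with rfl | ⟨hs0, _⟩
    · exfalso
      have hax : a*x = b*y := by
        have := hk; simp at this; linarith
      have e : (a*x)^2 = (b*y)^2 := by rw [hax]
      have h0 : (p:ℤ) * ((p:ℤ) - b^2 - y^2) = 0 := by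
        linear_combination ((p:ℤ) - y^2)*h1 + a^2*h2 + e
      rcases mul_eq_zero.mp h0 with h | h
      · exact absurd h (by exact_mod_cast hp.ne_zero)
      · exact hcontra b y (by linarith) hb hy
    · have h0' : a*y = -(b*x) := by nlinarith [hs0]
      exact uniq1_aux hp h1 h2 (by rw [h0']; ring)

private theorem uniq2_aux {p : ℕ} (hp : p.Prime) {a b x y : ℤ}
    (h1 : (p:ℤ) = a^2 + 2*b^2) (h2 : (p:ℤ) = x^2 + 2*y^2)
    (e : (a*y)^2 = (b*x)^2) : b^2 = y^2 := by
  have hp0 : (p:ℤ) ≠ 0 := by exact_mod_cast hp.ne_zero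
  have h0 : (p:ℤ) * (y^2 - b^2) = 0 := by linear_combination y^2*h1 - b^2*h2 + e
  rcases mul_eq_zero.mp h0 with h | h
  · exact absurd h hp0
  · linarith

private theorem uniq2 {p : ℕ} (hp : p.Prime) (hodd : p % 2 = 1) {a b x y : ℤ}
    (h1 : (p:ℤ) = a^2 + 2*b^2) (h2 : (p:ℤ) = x^2 + 2*y^2) : b^2 = y^2 := by
  have hpi : Prime (p:ℤ) := Int.prime_iff_natAbs_prime.mpr (by simpa using hp)
  have hppos : (0:ℤ) < p := by exact_mod_cast hp.pos
  have hcontra : (p:ℤ) = 2*b^2 + 2*y^2 → False := by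
    intro h
    omega
  have hkey : (p:ℤ) ∣ (a*x + 2*b*y) * (a*x - 2*b*y) :=
    ⟨a^2 - 2*y^2, by linear_combination 2*y^2*h1 - a^2*h2⟩
  rcases hpi.dvd_mul.mp hkey with hd | hd
  · obtain ⟨k, hk⟩ := hd
    have hsq : (p:ℤ)^2 = ((p:ℤ)*k)^2 + 2*(a*y - b*x)^2 := by
      rw [← hk]; linear_combination ((p:ℤ))*h2 + (x^2+2*y^2)*h1
    rcases small_k hppos hsq (by positivity) with rfl | ⟨hs0, _⟩
    · exfalso
      have hax : a*x = -(2*b*y) := by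
        have := hk; simp at this; linarith
      have e : (a*x)^2 = (2*b*y)^2 := by rw [hax]; ring
      have h0 : (p:ℤ) * ((p:ℤ) - 2*b^2 - 2*y^2) = 0 := by
        linear_combination ((p:ℤ) - 2*y^2)*h1 + a^2*h2 + e
      rcases mul_eq_zero.mp h0 with h | h
      · exact absurd h (by exact_mod_cast hp.ne_zero)
      · exact hcontra (by linarith)
    · have h0' : a*y = b*x := by nlinarith [hs0]
      exact uniq2_aux hp h1 h2 (by rw [h0'])
  · obtain ⟨k, hk⟩ := hd
    have hsq : (p:ℤ)^2 = ((p:ℤ)*k)^2 + 2*(a*y + b*x)^2 := by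
      rw [← hk]; linear_combination ((p:ℤ))*h2 + (x^2+2*y^2)*h1
    rcases small_k hppos hsq (by positivity) with rfl | ⟨hs0, _⟩
    · exfalso
      have hax : a*x = 2*b*y := by
        have := hk; simp at this; linarith
      have e : (a*x)^2 = (2*b*y)^2 := by rw [hax]
      have h0 : (p:ℤ) * ((p:ℤ) - 2*b^2 - 2*y^2) = 0 := by
        linear_combination ((p:ℤ) - 2*y^2)*h1 + a^2*h2 + e
      rcases mul_eq_zero.mp h0 with h | h
      · exact absurd h (by exact_mod_cast hp.ne_zero)
      · exact hcontra (by linarith)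
    · have h0' : a*y = -(b*x) := by nlinarith [hs0]
      exact uniq2_aux hp h1 h2 (by rw [h0']; ring)


private theorem sq_mod_two (n : ℕ) : n^2 % 2 = n % 2 := by
  rw [Nat.pow_mod]
  rcases Nat.even_or_odd n with h | h
  · rw [Nat.even_iff.mp h]
  · rw [Nat.odd_iff.mp h]

private theorem sq_dvd_prime_eq_one {p g : ℕ} (hp : p.Prime) (h : g^2 ∣ p) : g = 1 := by
  rcases hp.eq_one_or_self_of_dvd _ h with h1 | h1
  · rw [pow_two] at h1
    have hd : g ∣ 1 := ⟨g, h1.symm⟩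
    have := Nat.le_of_dvd one_pos hd
    have : g ≠ 0 := by rintro rfl; simp at h1
    omega
  · have hgp : g ∣ p := dvd_trans (dvd_pow_self g two_ne_zero) h
    rcases hp.eq_one_or_self_of_dvd _ hgp with h2 | h2
    · exact h2
    · exfalso; subst h2; have := hp.two_le; nlinarith [h1.symm]

private theorem chi8_pow (n e : ℕ) (hn : n % 2 = 1) (h : n^2 % 16 = 8 * (e % 2) + 1) :
    ZMod.χ₈ n = (-1)^e := by
  have hiff : (n % 8 = 1 ∨ n % 8 = 7) ↔ n^2 % 16 = 1 := by
    have hd : ∀ r : ℕ, r < 16 → r % 2 = 1 → ((r % 8 = 1 ∨ r % 8 = 7) ↔ r^2 % 16 = 1) := by decide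
    have h8 : n % 8 = (n % 16) % 8 := (Nat.mod_mod_of_dvd n (by norm_num)).symm
    have h2 : n % 2 = (n % 16) % 2 := (Nat.mod_mod_of_dvd n (by norm_num)).symm
    have hmod : n^2 % 16 = (n%16)^2 % 16 := by rw [Nat.pow_mod]
    rw [h8, hmod]
    exact hd (n % 16) (Nat.mod_lt _ (by norm_num)) (by omega)
  rw [ZMod.χ₈_nat_eq_if_mod_eight]
  rw [if_neg (by omega)]
  rcases Nat.even_or_odd e with he | he
  · rw [Even.neg_one_pow he, if_pos (hiff.mpr (by rw [Nat.even_iff.mp he] at h; omega))]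
  · rw [Odd.neg_one_pow he, if_neg (fun hc => by have := hiff.mp hc; rw [Nat.odd_iff.mp he] at h; omega)]

private theorem L1 {p a b k B : ℕ} [hFp : Fact p.Prime] (hpk : p = 8*k+1) (h : p = a^2 + b^2)
    (ha : a % 2 = 1) (hb : b = 4*B) (hgcd : Nat.gcd a b = 1) :
    legendreSym p ((a:ℤ) + b) = (-1)^(k+B) := by
  have hn2 : (a+b) % 2 = 1 := by omega
  have hnodd : Odd (a+b) := Nat.odd_iff.mpr hn2
  have step1 : legendreSym p ((a:ℤ) + b) = J((a+b : ℕ) | p) := by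
    rw [jacobiSym.legendreSym.to_jacobiSym]; norm_cast
  rw [step1, jacobiSym.quadratic_reciprocity_one_mod_four' hnodd (by omega : p % 4 = 1)]
  have hmod : ((p:ℕ):ℤ) % ((a+b:ℕ):ℤ) = (2*(a:ℤ)^2) % ((a+b:ℕ):ℤ) := by
    have hdvd : ((a+b:ℕ):ℤ) ∣ (2*(a:ℤ)^2 - (p:ℕ)) := by
      refine ⟨(a:ℤ) - b, ?_⟩
      have hcast : ((p:ℕ):ℤ) = (a:ℤ)^2 + (b:ℤ)^2 := by exact_mod_cast congrArg (Nat.cast : ℕ → ℤ) h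
      push_cast
      linear_combination -hcast
    exact Int.modEq_iff_dvd.mpr hdvd
  rw [jacobiSym.mod_left' hmod]
  have hg : Int.gcd (a:ℤ) ((a+b : ℕ) : ℤ) = 1 := by
    rw [Int.gcd_natCast_natCast, Nat.add_comm, Nat.gcd_add_self_right]
    exact hgcd
  rw [jacobiSym.mul_left, jacobiSym.sq_one' hg, mul_one, jacobiSym.at_two hnodd]
  apply chi8_pow _ _ hn2
  have habB : a * B % 2 = B % 2 := by
    conv_lhs => rw [Nat.mul_mod, ha]
    omega
  have hsqn : (a+b)^2 = p + 8*(a*B) := by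
    rw [h, hb]; ring
  omega

private theorem L2 {p c d k D : ℕ} [hFp : Fact p.Prime] (hpk : p = 8*k+1) (h : p = c^2 + 2*d^2)
    (hc : c % 2 = 1) (hd : d = 2*D) (hgcd : Nat.gcd d c = 1) :
    legendreSym p (c:ℤ) = (-1)^(k+D) := by
  have hcodd : Odd c := Nat.odd_iff.mpr hc
  have step1 : legendreSym p (c:ℤ) = J((c:ℕ) | p) := by
    rw [jacobiSym.legendreSym.to_jacobiSym]
  rw [step1, jacobiSym.quadratic_reciprocity_one_mod_four' hcodd (by omega : p % 4 = 1)]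
  have hmod : ((p:ℕ):ℤ) % ((c:ℕ):ℤ) = (2*(d:ℤ)^2) % ((c:ℕ):ℤ) := by
    have hdvd : ((c:ℕ):ℤ) ∣ (2*(d:ℤ)^2 - (p:ℕ)) := by
      refine ⟨-(c:ℤ), ?_⟩
      have hcast : ((p:ℕ):ℤ) = (c:ℤ)^2 + 2*(d:ℤ)^2 := by exact_mod_cast congrArg (Nat.cast : ℕ → ℤ) h
      linear_combination -hcast
    exact Int.modEq_iff_dvd.mpr hdvd
  rw [jacobiSym.mod_left' hmod]
  have hg : Int.gcd (d:ℤ) ((c:ℕ) : ℤ) = 1 := by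
    rw [Int.gcd_natCast_natCast]; exact hgcd
  rw [show (2*(d:ℤ)^2) = 2 * (d:ℤ)^2 by ring, jacobiSym.mul_left, jacobiSym.sq_one' hg, mul_one,
    jacobiSym.at_two hcodd]
  apply chi8_pow _ _ hc
  have hD2 : D^2 % 2 = D % 2 := sq_mod_two D
  have hsqn : c^2 + 8*(D^2) = p := by
    rw [h, hd]; ring
  omega

private theorem L3 {p : ℕ} [hFp : Fact p.Prime] (hp8 : p % 8 = 1) {a : ℤ} (m : ℕ) (hm : 0 < m)
    (hdvd : ((m:ℤ))^2 ∣ ((p:ℤ) - a^2)) : legendreSym p (m:ℤ) = 1 := by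
  have hp : p.Prime := hFp.out
  set t := m.factorization 2 with ht
  set u := m / 2^t with hu
  have hum : 2^t * u = m := Nat.ordProj_mul_ordCompl_eq_self m 2
  have huodd : u % 2 = 1 := by
    have h1 := Nat.coprime_ordCompl Nat.prime_two hm.ne'
    exact Nat.odd_iff.mp (Nat.coprime_two_left.mp h1)
  have hudvd : (u:ℕ) ∣ m := Dvd.intro_left _ hum
  -- gcd a u = 1
  have hg : Int.gcd a u = 1 := by
    set g := Int.gcd a u with hgdef
    have hga : (g:ℤ) ∣ a := Int.gcd_dvd_left _ _
    have hgu : (g:ℤ) ∣ u := Int.gcd_dvd_right _ _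
    have hgm : (g:ℤ) ∣ m := hgu.trans (Int.natCast_dvd_natCast.mpr hudvd)
    have hg2 : ((g:ℤ))^2 ∣ (p:ℤ) := by
      have h1 : ((g:ℤ))^2 ∣ ((p:ℤ) - a^2) := dvd_trans (pow_dvd_pow_of_dvd hgm 2) hdvd
      have h2 : ((g:ℤ))^2 ∣ a^2 := pow_dvd_pow_of_dvd hga 2
      have := dvd_add h1 h2
      simpa using this
    have hg2n : g^2 ∣ p := by exact_mod_cast hg2
    exact sq_dvd_prime_eq_one hp hg2n
  have hJu : J((u:ℕ) | p) = 1 := by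
    rw [jacobiSym.quadratic_reciprocity_one_mod_four' (Nat.odd_iff.mpr huodd) (by omega : p % 4 = 1)]
    have hmod : ((p:ℕ):ℤ) % ((u:ℕ):ℤ) = (a^2) % ((u:ℕ):ℤ) := by
      have hdvd' : ((u:ℕ):ℤ) ∣ (a^2 - (p:ℕ)) := by
        have : ((u:ℕ):ℤ) ∣ ((p:ℤ) - a^2) :=
          dvd_trans (Int.natCast_dvd_natCast.mpr hudvd)
            (dvd_trans (dvd_pow_self _ two_ne_zero) hdvd)
        have h2 := dvd_neg.mpr this
        simpa using h2
      exact Int.modEq_iff_dvd.mpr hdvd'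
    rw [jacobiSym.mod_left' hmod, jacobiSym.sq_one' hg]
  have hJ2 : J((2:ℤ) | p) = 1 := by
    rw [jacobiSym.at_two (Nat.odd_iff.mpr (by omega : p % 2 = 1)), ZMod.χ₈_nat_eq_if_mod_eight]
    rw [if_neg (by omega), if_pos (by omega)]
  calc legendreSym p (m:ℤ) = J(((2^t * u : ℕ) : ℤ) | p) := by
        rw [jacobiSym.legendreSym.to_jacobiSym, hum]
  _ = J((2:ℤ)^t * (u:ℕ) | p) := by push_cast; ring_nf
  _ = J((2:ℤ)^t | p) * J((u:ℕ) | p) := jacobiSym.mul_left _ _ _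
  _ = J((2:ℤ) | p)^t * J((u:ℕ) | p) := by rw [jacobiSym.pow_left]
  _ = 1 := by rw [hJ2, hJu, one_pow, mul_one]

private theorem zmod_alg {R : Type*} [CommRing R] {A Bb C Dd : R} {k B D : ℕ}
    (h1Z : A^2 + Bb^2 = 0) (h2Z : C^2 + 2*Dd^2 = 0)
    (E1 : (A + Bb)^(4*k) = (-1:R)^(k+B)) (E2 : C^(4*k) = (-1:R)^(k+D))
    (E3 : Bb^(4*k) = 1) (E4 : Dd^(4*k) = 1) :
    (-1:R)^(k+B) = (-1:R)^(2*k+D) := by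
  have e1 : (A + Bb)^2 = 2*(A*Bb) := by linear_combination h1Z
  have eA : A^2 = -(Bb^2) := by linear_combination h1Z
  have eC : C^2 = -(2*Dd^2) := by linear_combination h2Z
  have h42 : 4*k = 2*(2*k) := by ring
  have h2k : (2:R)^(2*k) = (-1:R)^(k+D) := by
    have hC4 : C^(4*k) = 2^(2*k) * Dd^(4*k) := by
      calc C^(4*k) = (C^2)^(2*k) := by rw [h42, pow_mul]
      _ = ((-(2*Dd^2)))^(2*k) := by rw [eC]
      _ = (2*Dd^2)^(2*k) := Even.neg_pow (even_two_mul k) _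
      _ = 2^(2*k) * Dd^(4*k) := by rw [mul_pow, ← pow_mul, show 2*(2*k) = 4*k by ring]
    rw [← E2, hC4, E4, mul_one]
  have hA2k : A^(2*k) = (-1:R)^k * Bb^(2*k) := by
    calc A^(2*k) = (A^2)^k := by rw [pow_mul]
    _ = (-(Bb^2))^k := by rw [eA]
    _ = (-1)^k * (Bb^2)^k := by rw [neg_pow]
    _ = (-1)^k * Bb^(2*k) := by rw [← pow_mul]
  calc (-1:R)^(k+B) = (A+Bb)^(4*k) := E1.symm
  _ = ((A+Bb)^2)^(2*k) := by rw [h42, pow_mul]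
  _ = (2*(A*Bb))^(2*k) := by rw [e1]
  _ = 2^(2*k) * (A^(2*k) * Bb^(2*k)) := by rw [mul_pow, mul_pow]
  _ = (-1)^(k+D) * ((-1)^k * (Bb^(2*k) * Bb^(2*k))) := by rw [h2k, hA2k]; ring
  _ = (-1)^(k+D) * ((-1)^k * Bb^(4*k)) := by rw [← pow_add, show 2*k+2*k = 4*k by ring]
  _ = (-1)^(k+D) * (-1)^k := by rw [E3, mul_one]
  _ = (-1)^(2*k+D) := by rw [← pow_add, show k+D+k = 2*k+D by ring]

private theorem key_parity {p a b c d k B D : ℕ} (hp : p.Prime)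
    (hpk : p = 8*k+1) (h1 : p = a^2 + b^2) (h2 : p = c^2 + 2*d^2)
    (ha : a%2 = 1) (hb : b = 4*B) (hc : c%2 = 1) (hd : d = 2*D)
    (hB0 : 0 < B) (hD0 : 0 < D)
    (hgab : Nat.gcd a b = 1) (hgdc : Nat.gcd d c = 1) :
    (k + B + D) % 2 = 0 := by
  haveI hFp : Fact p.Prime := ⟨hp⟩
  have hp2 : 2 < p := by have := hp.two_le; omega
  haveI : Fact (2 < p) := ⟨hp2⟩
  have hq : p / 2 = 4*k := by omega
  have hp8 : p % 8 = 1 := by omega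
  have h1Z : ((a:ℕ) : ZMod p)^2 + ((b:ℕ) : ZMod p)^2 = 0 := by
    have h0 := congrArg (Nat.cast : ℕ → ZMod p) h1.symm
    push_cast at h0
    rwa [ZMod.natCast_self] at h0
  have h2Z : ((c:ℕ) : ZMod p)^2 + 2*((d:ℕ) : ZMod p)^2 = 0 := by
    have h0 := congrArg (Nat.cast : ℕ → ZMod p) h2.symm
    push_cast at h0
    rwa [ZMod.natCast_self] at h0
  have hcast1 : ((p:ℕ):ℤ) = (a:ℤ)^2 + (b:ℤ)^2 := by exact_mod_cast congrArg (Nat.cast : ℕ → ℤ) h1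
  have hcast2 : ((p:ℕ):ℤ) = (c:ℤ)^2 + 2*(d:ℤ)^2 := by exact_mod_cast congrArg (Nat.cast : ℕ → ℤ) h2
  have E1 : (((a:ℕ) : ZMod p) + ((b:ℕ) : ZMod p))^(4*k) = (-1 : ZMod p)^(k+B) := by
    have he := legendreSym.eq_pow p ((a:ℤ)+b)
    rw [L1 hpk h1 ha hb hgab, hq] at he
    push_cast at he
    exact he.symm
  have E2 : ((c:ℕ) : ZMod p)^(4*k) = (-1 : ZMod p)^(k+D) := by
    have he := legendreSym.eq_pow p ((c:ℤ))
    rw [L2 hpk h2 hc hd hgdc, hq] at he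
    push_cast at he
    exact he.symm
  have E3 : ((b:ℕ) : ZMod p)^(4*k) = 1 := by
    have hdvd3 : ((b:ℕ):ℤ)^2 ∣ ((p:ℤ) - (a:ℤ)^2) := ⟨1, by rw [mul_one]; linear_combination hcast1⟩
    have l3 := L3 hp8 b (by omega) hdvd3
    have he := legendreSym.eq_pow p ((b:ℕ):ℤ)
    rw [l3, hq] at he
    push_cast at he
    exact he.symm
  have E4 : ((d:ℕ) : ZMod p)^(4*k) = 1 := by
    have hdvd4 : ((d:ℕ):ℤ)^2 ∣ ((p:ℤ) - (c:ℤ)^2) := ⟨2, by linear_combination hcast2⟩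
    have l3 := L3 hp8 d (by omega) hdvd4
    have he := legendreSym.eq_pow p ((d:ℕ):ℤ)
    rw [l3, hq] at he
    push_cast at he
    exact he.symm
  have hfinal := zmod_alg h1Z h2Z E1 E2 E3 E4
  by_contra hodd
  have hodd' : (k + B + D) % 2 = 1 := by omega
  have hcases : ((k+B) % 2 = 0 ∧ (2*k+D) % 2 = 1) ∨ ((k+B) % 2 = 1 ∧ (2*k+D) % 2 = 0) := by omega
  rcases hcases with ⟨he1, he2⟩ | ⟨he1, he2⟩
  · rw [Even.neg_one_pow (Nat.even_iff.mpr he1), Odd.neg_one_pow (Nat.odd_iff.mpr he2)] at hfinal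
    exact ZMod.neg_one_ne_one hfinal.symm
  · rw [Odd.neg_one_pow (Nat.odd_iff.mpr he1), Even.neg_one_pow (Nat.even_iff.mpr he2)] at hfinal
    exact ZMod.neg_one_ne_one hfinal

private theorem odd_sq_mod_eight {n : ℕ} (h : n % 2 = 1) : n^2 % 8 = 1 := by
  obtain ⟨m, rfl⟩ : ∃ m, n = 2*m+1 := ⟨n/2, by omega⟩
  obtain ⟨j, hj⟩ : Even (m*(m+1)) := Nat.even_mul_succ_self m
  have : (2*m+1)^2 = 8*j + 1 := by rw [show (2*m+1)^2 = 4*(m*(m+1)) + 1 by ring, hj]; ring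
  omega

private theorem gcd_sq_one {p g : ℕ} (hp : p.Prime) (hdvd : g^2 ∣ p) : g = 1 :=
  sq_dvd_prime_eq_one hp hdvd

private theorem kl4_normalize (p : ℕ) (hp : p.Prime) (hp8 : p % 8 = 1) :
    ∃ a b B c d D k : ℕ, p = 8*k+1 ∧ p = a^2+b^2 ∧ a%2=1 ∧ b=4*B ∧ 0<B ∧ Nat.gcd a b = 1 ∧
      p = c^2+2*d^2 ∧ c%2=1 ∧ d=2*D ∧ 0<D ∧ Nat.gcd d c = 1 := by
  haveI : Fact p.Prime := ⟨hp⟩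
  have hp2 := hp.two_le
  obtain ⟨a0, b0, hab0⟩ := Nat.Prime.sq_add_sq (by omega : p % 4 ≠ 3)
  -- normalize so that a is odd
  obtain ⟨a, b, hab, ha⟩ : ∃ a b : ℕ, p = a^2 + b^2 ∧ a % 2 = 1 := by
    rcases Nat.even_or_odd a0 with h | h
    · refine ⟨b0, a0, by omega, ?_⟩
      -- b0 must be odd
      by_contra hb0
      have h1 : a0 % 2 = 0 := Nat.even_iff.mp h
      have h2 : b0 % 2 = 0 := by omega
      have e1 := sq_mod_two a0
      have e2 := sq_mod_two b0
      omega
    · exact ⟨a0, b0, hab0.symm, Nat.odd_iff.mp h⟩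
  have hbB : ∃ B, b = 4*B := by
    have e1 := odd_sq_mod_eight ha
    have e2 : b % 2 = 0 := by
      have := sq_mod_two b
      omega
    obtain ⟨t, rfl⟩ : ∃ t, b = 2*t := ⟨b/2, by omega⟩
    have e3 : (2*t)^2 = 4*t^2 := by ring
    have e4 := sq_mod_two t
    have e5 : t % 2 = 0 := by omega
    exact ⟨t/2, by omega⟩
  obtain ⟨B, hb⟩ := hbB
  have hB0 : 0 < B := by
    rcases Nat.eq_zero_or_pos B with h | h
    · exfalso
      have hb0 : b = 0 := by omega
      subst hb0
      have hpa : p = a^2 := by simpa using hab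
      have ha1 : a = 1 := gcd_sq_one hp ⟨1, by omega⟩
      rw [ha1] at hpa
      simp at hpa
      omega
    · exact h
  have hgab : Nat.gcd a b = 1 := by
    apply gcd_sq_one hp
    have h1 : (Nat.gcd a b)^2 ∣ a^2 := pow_dvd_pow_of_dvd (Nat.gcd_dvd_left a b) 2
    have h2 : (Nat.gcd a b)^2 ∣ b^2 := pow_dvd_pow_of_dvd (Nat.gcd_dvd_right a b) 2
    rw [hab]
    exact dvd_add h1 h2
  -- c, d part
  obtain ⟨x, y, hxy⟩ := exists_sq_add_two_sq p hp hp8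
  obtain ⟨c, d, hcd⟩ : ∃ c d : ℕ, p = c^2 + 2*d^2 := by
    refine ⟨x.natAbs, y.natAbs, ?_⟩
    have hx : ((x.natAbs : ℤ))^2 = x^2 := by rw [Int.natAbs_sq]
    have hy : ((y.natAbs : ℤ))^2 = y^2 := by rw [Int.natAbs_sq]
    have : (p:ℤ) = (x.natAbs:ℤ)^2 + 2*(y.natAbs:ℤ)^2 := by rw [hx, hy]; exact hxy
    exact_mod_cast this
  have hc : c % 2 = 1 := by
    by_contra hc0
    have h1 : c % 2 = 0 := by omega
    have e1 := sq_mod_two c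
    have e2 := sq_mod_two d
    omega
  have hdD : ∃ D, d = 2*D := by
    have e1 := odd_sq_mod_eight hc
    have e2 := sq_mod_two d
    exact ⟨d/2, by omega⟩
  obtain ⟨D, hd⟩ := hdD
  have hD0 : 0 < D := by
    rcases Nat.eq_zero_or_pos D with h | h
    · exfalso
      have hd0 : d = 0 := by omega
      subst hd0
      have hpc : p = c^2 := by simpa using hcd
      have hc1 : c = 1 := gcd_sq_one hp ⟨1, by omega⟩
      rw [hc1] at hpc
      simp at hpc
      omega
    · exact h
  have hgdc : Nat.gcd d c = 1 := by
    apply gcd_sq_one hp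
    have h1 : (Nat.gcd d c)^2 ∣ c^2 := pow_dvd_pow_of_dvd (Nat.gcd_dvd_right d c) 2
    have h2 : (Nat.gcd d c)^2 ∣ 2*d^2 :=
      Dvd.dvd.mul_left (pow_dvd_pow_of_dvd (Nat.gcd_dvd_left d c) 2) 2
    rw [hcd]
    exact dvd_add h1 h2
  exact ⟨a, b, B, c, d, D, p/8, by omega, hab, ha, hb, hB0, hgab, hcd, hc, hd, hD0, hgdc⟩

private theorem bridge64 {p a b B : ℕ} (hp : p.Prime) (hodd : p % 2 = 1)
    (h1 : p = a^2 + b^2) (ha : a % 2 = 1) (hb : b = 4*B) :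
    ((∃ x y : ℤ, (p:ℤ) = x^2 + 64*y^2) ↔ B % 2 = 0) := by
  constructor
  · rintro ⟨x, y, hxy⟩
    have h2 : (p:ℤ) = x^2 + (8*y)^2 := by rw [hxy]; ring
    have hpodd : (p:ℤ) % 2 = 1 := by omega
    have hx : x % 2 = 1 := by
      rcases Int.emod_two_eq x with h | h
      · exfalso
        have e1 := int_even_sq h
        have e2 : (8*y)^2 = 4*(16*y^2) := by ring
        omega
      · exact h
    have h1' : (p:ℤ) = (a:ℤ)^2 + (b:ℤ)^2 := by exact_mod_cast congrArg (Nat.cast : ℕ → ℤ) h1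
    have ha' : (a:ℤ) % 2 = 1 := by omega
    have := uniq1 hp hodd h1' h2 ha' hx
    -- (b:ℤ)^2 = (8*y)^2
    have hBsq : ((B:ℤ))^2 * 16 = 64 * y^2 := by
      have hbz : (b:ℤ) = 4*B := by exact_mod_cast congrArg (Nat.cast : ℕ → ℤ) hb
      nlinarith [this, hbz]
    by_contra hB1
    have hB1' : (B:ℤ) % 2 = 1 := by omega
    have := int_odd_sq hB1'
    omega
  · intro hB
    obtain ⟨m, hm⟩ : ∃ m, B = 2*m := ⟨B/2, by omega⟩
    refine ⟨(a:ℤ), (m:ℤ), ?_⟩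
    have : p = a^2 + 64*m^2 := by rw [h1, hb, hm]; ring
    exact_mod_cast congrArg (Nat.cast : ℕ → ℤ) this

private theorem bridge32 {p c d D : ℕ} (hp : p.Prime) (hodd : p % 2 = 1)
    (h2 : p = c^2 + 2*d^2) (hd : d = 2*D) :
    ((∃ x y : ℤ, (p:ℤ) = x^2 + 32*y^2) ↔ D % 2 = 0) := by
  constructor
  · rintro ⟨x, y, hxy⟩
    have h2' : (p:ℤ) = (c:ℤ)^2 + 2*(d:ℤ)^2 := by exact_mod_cast congrArg (Nat.cast : ℕ → ℤ) h2
    have hxy' : (p:ℤ) = x^2 + 2*(4*y)^2 := by rw [hxy]; ring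
    have := uniq2 hp hodd h2' hxy'
    -- (d:ℤ)^2 = (4*y)^2
    have hDsq : ((D:ℤ))^2 * 4 = 16 * y^2 := by
      have hdz : (d:ℤ) = 2*D := by exact_mod_cast congrArg (Nat.cast : ℕ → ℤ) hd
      nlinarith [this, hdz]
    by_contra hD1
    have hD1' : (D:ℤ) % 2 = 1 := by omega
    have := int_odd_sq hD1'
    omega
  · intro hD
    obtain ⟨m, hm⟩ : ∃ m, D = 2*m := ⟨D/2, by omega⟩
    refine ⟨(c:ℤ), (m:ℤ), ?_⟩
    have : p = c^2 + 32*m^2 := by rw [h2, hd, hm]; ring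
    exact_mod_cast congrArg (Nat.cast : ℕ → ℤ) this

private theorem mod3_reduce {p : ℕ} (h3 : p % 3 = 1) :
    ((∃ x y : ℤ, (p:ℤ) = x^2 + 288*y^2) ↔ (∃ x y : ℤ, (p:ℤ) = x^2 + 32*y^2)) := by
  constructor
  · rintro ⟨x, y, hxy⟩
    exact ⟨x, 3*y, by rw [hxy]; ring⟩
  · rintro ⟨x, y, hxy⟩
    have hdec : ∀ u v : ZMod 3, u^2 + 2*v^2 = 1 → v = 0 := by decide
    have hps : ((p:ℕ) : ZMod 3) = 1 := by
      have h := ZMod.natCast_mod p 3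
      rw [h3] at h
      simpa using h.symm
    have hcast := congrArg (Int.cast : ℤ → ZMod 3) hxy
    push_cast at hcast
    rw [hps] at hcast
    have h32 : (32 : ZMod 3) = 2 := by decide
    rw [h32] at hcast
    have hy0 : ((y:ℤ) : ZMod 3) = 0 := hdec _ _ hcast.symm
    obtain ⟨z, hz⟩ : (3:ℤ) ∣ y := by
      have := (ZMod.intCast_zmod_eq_zero_iff_dvd y 3).mp hy0
      exact_mod_cast this
    exact ⟨x, z, by rw [hxy, hz]; ring⟩

theorem kaplansky_like_4 (p : ℕ) (hp : p.Prime) :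
    (p % 48 = 1 → ((∃ x y : ℤ, (p : ℤ) = x ^ 2 + 64 * y ^ 2) ↔
      (∃ x y : ℤ, (p : ℤ) = x ^ 2 + 288 * y ^ 2))) ∧
    (p % 48 = 25 → Xor' (∃ x y : ℤ, (p : ℤ) = x ^ 2 + 64 * y ^ 2)
      (∃ x y : ℤ, (p : ℤ) = x ^ 2 + 288 * y ^ 2)) := by
  constructor
  · intro h48
    have hp8 : p % 8 = 1 := by omega
    have h16 : p % 16 = 1 := by omega
    have h3 : p % 3 = 1 := by omega
    have hodd : p % 2 = 1 := by omega
    obtain ⟨a, b, B, c, d, D, k, hpk, hab, ha, hb, hB0, hgab, hcd, hc, hd, hD0, hgdc⟩ :=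
      kl4_normalize p hp hp8
    have hpar := key_parity hp hpk hab hcd ha hb hc hd hB0 hD0 hgab hgdc
    have hkeven : k % 2 = 0 := by omega
    rw [mod3_reduce h3, bridge64 hp hodd hab ha hb, bridge32 hp hodd hcd hd]
    omega
  · intro h48
    have hp8 : p % 8 = 1 := by omega
    have h16 : p % 16 = 9 := by omega
    have h3 : p % 3 = 1 := by omega
    have hodd : p % 2 = 1 := by omega
    obtain ⟨a, b, B, c, d, D, k, hpk, hab, ha, hb, hB0, hgab, hcd, hc, hd, hD0, hgdc⟩ :=
      kl4_normalize p hp hp8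
    have hpar := key_parity hp hpk hab hcd ha hb hc hd hB0 hD0 hgab hgdc
    have hkodd : k % 2 = 1 := by omega
    have i64 := bridge64 hp hodd hab ha hb
    have i32 := (mod3_reduce h3).trans (bridge32 hp hodd hcd hd)
    rcases Nat.even_or_odd B with hB | hB
    · left
      refine ⟨i64.mpr (Nat.even_iff.mp hB), fun h288 => ?_⟩
      have := i32.mp h288
      have hBe := Nat.even_iff.mp hB
      omega
    · right
      have hBo := Nat.odd_iff.mp hB
      refine ⟨i32.mpr (by omega), fun h64 => ?_⟩
      have := i64.mp h64
      omega
end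

section
/- Let p be a prime with p ≡ 1 (mod 8). Then −4 is an eighth power modulo p (i.e., there exists an integer z with z⁸ ≡ −4 (mod p)) if and only if there exist integers x and y with p = x² + 32y². -/
set_option maxHeartbeats 1000000

theorem rep_eight (p : ℕ) (hp : p.Prime) (h8 : p % 8 = 1) :
    ∃ u v : ℕ, p = u ^ 2 + 8 * v ^ 2 := by
  haveI : Fact p.Prime := ⟨hp⟩
  haveI : NeZero p := ⟨hp.pos.ne'⟩
  have hp2 : p ≠ 2 := by omega
  obtain ⟨r, hr⟩ : IsSquare (-2 : ZMod p) :=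
    (ZMod.exists_sq_eq_neg_two_iff hp2).mpr (Or.inl h8)
  have hr2 : r ^ 2 = -2 := by rw [sq]; exact hr.symm
  have hcard : Fintype.card (ZMod p) < Fintype.card (Fin (p.sqrt + 1) × Fin (p.sqrt + 1)) := by
    simp only [Fintype.card_prod, Fintype.card_fin, ZMod.card]
    have := Nat.lt_succ_sqrt p
    nlinarith
  obtain ⟨⟨x1, y1⟩, ⟨x2, y2⟩, hne, heq⟩ :=
    Fintype.exists_ne_map_eq_of_card_lt
      (fun xy : Fin (p.sqrt + 1) × Fin (p.sqrt + 1) =>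
        ((xy.1 : ℕ) : ZMod p) + r * ((xy.2 : ℕ) : ZMod p)) hcard
  have heq' : ((x1:ℕ) : ZMod p) + r * ((y1:ℕ) : ZMod p)
      = ((x2:ℕ):ZMod p) + r*((y2:ℕ):ZMod p) := heq
  obtain ⟨a, ha⟩ : ∃ a : ℤ, a = ((x1:ℕ):ℤ) - ((x2:ℕ):ℤ) := ⟨_, rfl⟩
  obtain ⟨b, hb⟩ : ∃ b : ℤ, b = ((y1:ℕ):ℤ) - ((y2:ℕ):ℤ) := ⟨_, rfl⟩
  have hab : ((a : ZMod p)) + r * (b : ZMod p) = 0 := by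
    rw [ha, hb]; push_cast; linear_combination heq'
  have hdvd : (p : ℤ) ∣ a ^ 2 + 2 * b ^ 2 := by
    have h0 : ((a ^ 2 + 2 * b ^ 2 : ℤ) : ZMod p) = 0 := by
      push_cast
      have hh : (a : ZMod p) = - (r * b) := by linear_combination hab
      rw [hh]
      linear_combination (b:ZMod p)^2 * hr2
    exact (ZMod.intCast_zmod_eq_zero_iff_dvd _ p).mp h0
  have hsq : (p.sqrt : ℤ) ^ 2 < p := by
    have h1 : p.sqrt * p.sqrt ≤ p := Nat.sqrt_le p
    have h2 : p.sqrt * p.sqrt ≠ p := by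
      intro h
      rcases (Nat.Prime.eq_one_or_self_of_dvd hp p.sqrt ⟨p.sqrt, h.symm⟩) with h' | h'
      · rw [h'] at h; simp at h; have := hp.two_le; omega
      · nlinarith [hp.two_le]
    have h3 : p.sqrt * p.sqrt < p := lt_of_le_of_ne h1 h2
    zify at h3; rw [sq]; exact h3
  have hx1 : (x1:ℕ) ≤ p.sqrt := Nat.lt_succ_iff.mp x1.2
  have hx2 : (x2:ℕ) ≤ p.sqrt := Nat.lt_succ_iff.mp x2.2
  have hy1 : (y1:ℕ) ≤ p.sqrt := Nat.lt_succ_iff.mp y1.2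
  have hy2 : (y2:ℕ) ≤ p.sqrt := Nat.lt_succ_iff.mp y2.2
  clear hcard heq heq' hab hr hr2
  have hba : a ^ 2 ≤ (p.sqrt : ℤ) ^ 2 := by
    have : -(p.sqrt:ℤ) ≤ a ∧ a ≤ p.sqrt := by rw [ha]; push_cast; omega
    nlinarith [this.1, this.2]
  have hbb : b ^ 2 ≤ (p.sqrt : ℤ) ^ 2 := by
    have : -(p.sqrt:ℤ) ≤ b ∧ b ≤ p.sqrt := by rw [hb]; push_cast; omega
    nlinarith [this.1, this.2]
  have hne0 : a ^ 2 + 2 * b ^ 2 ≠ 0 := by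
    intro h
    have ha0 : a = 0 := by nlinarith [sq_nonneg a, sq_nonneg b]
    have hb0 : b = 0 := by nlinarith [sq_nonneg a, sq_nonneg b]
    apply hne
    rw [ha] at ha0; rw [hb] at hb0
    have hx : (x1 : ℕ) = x2 := by omega
    have hy : (y1 : ℕ) = y2 := by omega
    exact Prod.ext (Fin.ext hx) (Fin.ext hy)
  have hlt : a ^ 2 + 2 * b ^ 2 < 3 * p := by nlinarith
  have hpos : 0 < a ^ 2 + 2 * b ^ 2 :=
    lt_of_le_of_ne (by positivity) (Ne.symm hne0)
  obtain ⟨c, hc⟩ := hdvd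
  have hppos : (0:ℤ) < p := by exact_mod_cast hp.pos
  have hcpos : 0 < c := by nlinarith
  have hc' : c = 1 ∨ c = 2 := by
    have : c < 3 := by nlinarith
    omega
  -- produce integers s t with p = s² + 2 t²
  have hst : ∃ s t : ℤ, (p:ℤ) = s ^ 2 + 2 * t ^ 2 := by
    rcases hc' with h1 | h2
    · exact ⟨a, b, by rw [h1, mul_one] at hc; linarith⟩
    · rw [h2] at hc
      have hae : Even a := by
        have h2a : Even (a ^ 2) := by
          refine ⟨(p:ℤ) - b^2 , by linarith⟩
        exact (Int.even_pow.mp h2a).1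
      obtain ⟨a1, ha1⟩ := hae
      exact ⟨b, a1, by nlinarith⟩
  obtain ⟨s, t, hst⟩ := hst
  -- to naturals
  have hSN : p = s.natAbs ^ 2 + 2 * t.natAbs ^ 2 := by
    have h1 : ((s.natAbs:ℤ)) * s.natAbs = s * s := Int.natAbs_mul_self' s
    have h2 : ((t.natAbs:ℤ)) * t.natAbs = t * t := Int.natAbs_mul_self' t
    have h3 : (p:ℤ) = (s.natAbs:ℤ)^2 + 2*(t.natAbs:ℤ)^2 := by
      rw [sq, sq, h1, h2, hst]; ring
    exact_mod_cast h3
  obtain ⟨S, T, hST⟩ : ∃ S T : ℕ, p = S ^ 2 + 2 * T ^ 2 := ⟨_, _, hSN⟩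
  clear hSN hst hc hc' hlt hpos hne0 hba hbb hsq hne ha hb hcpos
  -- S odd, T even
  have hSodd : S % 2 = 1 := by
    rcases Nat.even_or_odd S with he | ho
    · obtain ⟨k, hk⟩ := he
      exfalso
      have hev : p = 2 * (2 * (k * k) + T ^ 2) := by rw [hST, hk]; ring
      omega
    · exact Nat.odd_iff.mp ho
  have hS8 : S ^ 2 % 8 = 1 := by
    obtain ⟨m, hm⟩ := Nat.even_mul_succ_self (S / 2)
    have hm' : S / 2 * (S / 2) + S / 2 = 2 * m := by
      have : S / 2 * (S / 2 + 1) = S / 2 * (S / 2) + S / 2 := by ring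
      omega
    have hexp : S ^ 2 = 4 * (S / 2 * (S / 2) + S / 2) + 1 := by
      have h1 : S = 2 * (S / 2) + 1 := by omega
      calc S ^ 2 = (2 * (S / 2) + 1) ^ 2 := by rw [← h1]
        _ = 4 * (S / 2 * (S / 2) + S / 2) + 1 := by ring
    omega
  have hTe : Even T := by
    rcases Nat.even_or_odd T with he | ho
    · exact he
    · exfalso
      obtain ⟨j, hj⟩ := ho
      have hje : p = S ^ 2 + 8 * (j * j) + 8 * j + 2 := by rw [hST, hj]; ring
      omega
  obtain ⟨v, hv⟩ := hTe
  exact ⟨S, v, by rw [hST, hv]; ring⟩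

theorem key (p : ℕ) (hp : p.Prime) (h8 : p % 8 = 1) (u v : ℕ)
    (huv : p = u ^ 2 + 8 * v ^ 2) :
    (∃ z : ℤ, z ^ 8 ≡ -4 [ZMOD (p : ℤ)]) ↔ Even v := by
  haveI : Fact p.Prime := ⟨hp⟩
  have hp2 : p ≠ 2 := by omega
  have hp4 : p % 4 = 1 := by omega
  have hpodd : Odd p := by rw [Nat.odd_iff]; omega
  -- u is odd
  have huodd : u % 2 = 1 := by
    rcases Nat.even_or_odd u with he | ho
    · obtain ⟨k, hk⟩ := he
      exfalso
      have : p = 2 * (2 * (k * k) + 4 * v ^ 2) := by rw [huv, hk]; ring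
      omega
    · exact Nat.odd_iff.mp ho
  -- v ≠ 0
  have hv0 : v ≠ 0 := by
    intro h
    rw [h] at huv
    simp at huv
    have hdvd : u ∣ p := ⟨u, by rw [huv]; ring⟩
    rcases hp.eq_one_or_self_of_dvd u hdvd with h1 | h1
    · rw [h1] at huv; simp at huv; have := hp.one_lt; omega
    · rw [h1] at huv; nlinarith [hp.two_le]
  have hu0 : u ≠ 0 := by intro h; rw [h] at huodd; simp at huodd
  -- coprimality of u and v
  have hcop : Nat.Coprime u v := by
    rw [Nat.coprime_iff_gcd_eq_one]
    by_contra hg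
    obtain ⟨q, hq, hqd⟩ := Nat.exists_prime_and_dvd hg
    have hqu : q ∣ u := hqd.trans (Nat.gcd_dvd_left u v)
    have hqv : q ∣ v := hqd.trans (Nat.gcd_dvd_right u v)
    obtain ⟨a, ha⟩ := hqu
    obtain ⟨b, hb⟩ := hqv
    have hq2 : q ^ 2 ∣ p := ⟨a ^ 2 + 8 * b ^ 2, by rw [huv, ha, hb]; ring⟩
    have hqp : q ∣ p := (dvd_pow_self q two_ne_zero).trans hq2
    have : q = p := ((Nat.prime_dvd_prime_iff_eq hq hp).mp hqp)
    rw [this] at hq2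
    have h1 : p ^ 2 ≤ p := Nat.le_of_dvd hp.pos hq2
    nlinarith [hp.two_le]
  -- bounds to show u, v nonzero mod p
  have hult : u < p := by nlinarith [hp.two_le, Nat.one_le_iff_ne_zero.mpr hv0]
  have hvlt : v < p := by nlinarith [hp.two_le, Nat.one_le_iff_ne_zero.mpr hv0, Nat.one_le_iff_ne_zero.mpr hu0]
  have huF : ((u : ZMod p)) ≠ 0 := by
    rw [Ne, ZMod.natCast_eq_zero_iff]
    intro h
    have := Nat.le_of_dvd (Nat.pos_of_ne_zero hu0) h
    omega
  have hvF : ((v : ZMod p)) ≠ 0 := by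
    rw [Ne, ZMod.natCast_eq_zero_iff]
    intro h
    have := Nat.le_of_dvd (Nat.pos_of_ne_zero hv0) h
    omega
  have h2F : ((2 : ZMod p)) ≠ 0 := by
    intro h
    have h2 : ((2:ℕ) : ZMod p) = 0 := by push_cast; exact h
    rw [ZMod.natCast_eq_zero_iff] at h2
    rcases (Nat.prime_dvd_prime_iff_eq hp Nat.prime_two).mp h2 with h
    exact hp2 h
  -- the relation in F
  have hF0 : ((u : ZMod p)) ^ 2 + 8 * (v : ZMod p) ^ 2 = 0 := by
    have h : ((u ^ 2 + 8 * v ^ 2 : ℕ) : ZMod p) = 0 := by rw [← huv]; exact ZMod.natCast_self p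
    push_cast at h
    linear_combination h
  -- square root of -1
  obtain ⟨i, hi⟩ : IsSquare (-1 : ZMod p) := ZMod.exists_sq_eq_neg_one_iff.mpr (by omega)
  have hi2 : i ^ 2 = -1 := by rw [sq]; exact hi.symm
  have hi0 : i ≠ 0 := by intro h; rw [h] at hi2; simp at hi2
  have hk : p / 2 = 4 * (p / 8) := by omega
  have hi4 : i ^ 4 = 1 := by rw [show (4:ℕ) = 2*2 from rfl, pow_mul, hi2]; ring
  -- square root of -i
  have hnegi : IsSquare (-i : ZMod p) := by
    rw [ZMod.euler_criterion p (by simpa using hi0 : (-i : ZMod p) ≠ 0), hk, pow_mul]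
    rw [show (-i)^4 = i^4 by ring, hi4, one_pow]
  obtain ⟨w, hw⟩ := hnegi
  have hw2 : w ^ 2 = -i := by rw [sq]; exact hw.symm
  have hw4 : w ^ 4 = -1 := by
    rw [show (4:ℕ) = 2*2 from rfl, pow_mul, hw2, show (-i)^2 = i^2 by ring, hi2]
  have hw0 : w ≠ 0 := by
    intro h; rw [h] at hw2; simp at hw2; rw [← hw2] at hi0; simp at hi0
  -- m := u / (2v)
  set d : ZMod p := 2 * (v : ZMod p) with hd
  have hd0 : d ≠ 0 := mul_ne_zero h2F hvF
  set m : ZMod p := (u : ZMod p) * d⁻¹ with hm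
  have hm2 : m ^ 2 = -2 := by
    rw [hm]
    field_simp
    linear_combination hF0
  have hm0 : m ≠ 0 := by
    intro h; rw [h] at hm2; simp at hm2
    exact h2F hm2
  have hmw2 : (m * w) ^ 2 = 2 * i := by
    rw [mul_pow, hm2, hw2]; ring
  have hmw0 : m * w ≠ 0 := mul_ne_zero hm0 hw0
  -- Step 1 : the z^8 = -4 condition is equivalent to IsSquare (m*w)
  have step1 : (∃ z : ℤ, z ^ 8 ≡ -4 [ZMOD (p : ℤ)]) ↔ IsSquare (m * w) := by
    constructor
    · rintro ⟨z, hz⟩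
      have hzF : ((z : ZMod p)) ^ 8 = -4 := by
        have h := (ZMod.intCast_eq_intCast_iff _ _ _).mpr hz
        push_cast at h
        exact h
      set ζ : ZMod p := (z : ZMod p) with hζ
      have hfac : (ζ ^ 4 - 2 * i) * (ζ ^ 4 + 2 * i) = 0 := by
        linear_combination hzF - 4 * hi2
      rcases mul_eq_zero.mp hfac with h4 | h4
      · have hfac2 : (ζ ^ 2 - m * w) * (ζ ^ 2 + m * w) = 0 := by
          linear_combination h4 - hmw2
        rcases mul_eq_zero.mp hfac2 with h2' | h2'
        · exact ⟨ζ, by linear_combination -h2'⟩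
        · exact ⟨i * ζ, by linear_combination h2' - ζ^2 * hi2⟩
      · have hmiw2 : (ζ ^ 2 - m * i * w) * (ζ ^ 2 + m * i * w) = 0 := by
          have hsq : (m * i * w) ^ 2 = -(2 * i) := by
            rw [mul_pow, mul_pow, hm2, hi2, hw2]; ring
          linear_combination h4 - hsq
        rcases mul_eq_zero.mp hmiw2 with h2' | h2'
        · refine ⟨ζ * w, ?_⟩
          -- (ζ w)² = ζ² w² = (m i w)(-i) = m w
          have : (ζ * w) * (ζ * w) = ζ^2 * w^2 := by ring
          rw [this]
          have h2'' : ζ ^ 2 = m * i * w := by linear_combination h2'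
          rw [h2'', hw2]
          linear_combination m*w*hi2
        · refine ⟨i * ζ * w, ?_⟩
          have : (i * ζ * w) * (i * ζ * w) = i^2 * ζ^2 * w^2 := by ring
          rw [this]
          have h2'' : ζ ^ 2 = -(m * i * w) := by linear_combination h2'
          rw [h2'', hi2, hw2]
          linear_combination m*w*hi2
    · rintro ⟨t, ht⟩
      obtain ⟨z, hz⟩ := ZMod.intCast_surjective (n := p) t
      refine ⟨z, ?_⟩
      have hgoal : ((z ^ 8 : ℤ) : ZMod p) = ((-4 : ℤ) : ZMod p) := by
        push_cast
        rw [hz]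
        have h1 : t ^ 2 = m * w := by rw [sq]; exact ht.symm
        have h2 : t ^ 8 = ((t ^ 2) ^ 2) ^ 2 := by ring
        rw [h2, h1, hmw2]
        linear_combination 4 * hi2
      exact (ZMod.intCast_eq_intCast_iff _ _ _).mp hgoal
  -- Euler criterion computation
  have heuler : IsSquare (m * w) ↔ (m * w) ^ (p / 2) = 1 :=
    ZMod.euler_criterion p hmw0
  -- Legendre symbol facts (to be proved)
  have J1 : legendreSym p u = ZMod.χ₈ u := by
    have huO : Odd u := Nat.odd_iff.mpr huodd
    have h1 : legendreSym p u = jacobiSym u p := jacobiSym.legendreSym.to_jacobiSym p u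
    have h2 : jacobiSym (u : ℤ) p = jacobiSym (p : ℤ) u :=
      jacobiSym.quadratic_reciprocity_one_mod_four' huO hp4
    have h3 : jacobiSym ((p : ℕ) : ℤ) u = jacobiSym ((8 * v ^ 2 : ℤ)) u := by
      apply jacobiSym.mod_left'
      have : ((p : ℕ) : ℤ) ≡ (8 * v ^ 2 : ℤ) [ZMOD (u : ℤ)] := by
        apply Int.ModEq.symm
        rw [Int.modEq_iff_dvd]
        refine ⟨u, ?_⟩
        push_cast [huv]
        ring
      exact this
    have h4 : ((8 * v ^ 2 : ℤ)) = 2 * (2 * v : ℤ) ^ 2 := by ring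
    have hcop2v : Int.gcd ((2 * v : ℕ) : ℤ) ((u : ℕ) : ℤ) = 1 := by
      rw [Int.gcd_natCast_natCast]
      have hc2 : Nat.Coprime 2 u := Nat.coprime_two_left.mpr huO
      exact Nat.Coprime.mul (hc2) (hcop.symm)
    have h5 : jacobiSym ((8 * v ^ 2 : ℤ)) u = jacobiSym 2 u := by
      rw [h4, jacobiSym.mul_left]
      have : jacobiSym ((2 * v : ℤ) ^ 2) u = 1 := by
        apply jacobiSym.sq_one'
        exact_mod_cast hcop2v
      rw [this, mul_one]
    rw [h1, h2, h3, h5]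
    exact jacobiSym.at_two huO
  have J2 : legendreSym p (2 * v) = 1 := by
    have hL2 : legendreSym p 2 = 1 := by
      rw [jacobiSym.legendreSym.to_jacobiSym, jacobiSym.at_two hpodd, ZMod.χ₈_nat_mod_eight, h8]
      decide
    -- split off the 2-part of v
    set e : ℕ := v.factorization 2 with he
    set c : ℕ := v / 2 ^ e with hc
    have hvc : v = 2 ^ e * c := (Nat.ordProj_mul_ordCompl_eq_self v 2).symm
    have hcodd : Odd c := by
      rw [Nat.odd_iff, Nat.two_dvd_ne_zero.symm] at *
      exact Nat.not_dvd_ordCompl Nat.prime_two hv0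
    have hcdvd : c ∣ v := ⟨2 ^ e, by rw [hvc]; ring⟩
    have hLc : legendreSym p c = 1 := by
      rw [jacobiSym.legendreSym.to_jacobiSym]
      have r1 : jacobiSym (c : ℤ) p = jacobiSym (p : ℤ) c :=
        jacobiSym.quadratic_reciprocity_one_mod_four' hcodd hp4
      have r2 : jacobiSym ((p : ℕ) : ℤ) c = jacobiSym (((u : ℤ)) ^ 2) c := by
        apply jacobiSym.mod_left'
        have : ((p : ℕ) : ℤ) ≡ ((u : ℤ)) ^ 2 [ZMOD (c : ℤ)] := by
          rw [Int.modEq_iff_dvd]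
          obtain ⟨t, ht⟩ := hcdvd
          refine ⟨-(8 * t ^ 2 * c), ?_⟩
          push_cast [huv, ht]
          ring
        exact this
      have r3 : jacobiSym (((u : ℤ)) ^ 2) c = 1 := by
        apply jacobiSym.sq_one'
        have : Nat.Coprime u c := Nat.Coprime.coprime_dvd_right hcdvd hcop
        exact_mod_cast (by rw [Int.gcd_natCast_natCast]; exact this : Int.gcd ((u:ℕ):ℤ) ((c:ℕ):ℤ) = 1)
      rw [r1, r2, r3]
    have hχp : ZMod.χ₈ (p : ZMod 8) = 1 := by
      rw [ZMod.χ₈_nat_mod_eight, h8]; decide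
    have hLv : legendreSym p v = 1 := by
      have hv' : ((v : ℕ) : ℤ) = (2 : ℤ) ^ e * (c : ℤ) := by
        rw [hvc]; push_cast; ring
      rw [hv', legendreSym.mul]
      have hpe : legendreSym p ((2 : ℤ) ^ e) = 1 := by
        rw [jacobiSym.legendreSym.to_jacobiSym, jacobiSym.pow_left, jacobiSym.at_two hpodd, hχp, one_pow]
      rw [hpe, hLc, one_mul]
    calc legendreSym p (2 * v) = legendreSym p 2 * legendreSym p v := legendreSym.mul p 2 v
      _ = 1 := by rw [hL2, hLv, one_mul]
  -- power computation
  have hpow : (m * w) ^ (p / 2) = ((ZMod.χ₈ u * (-1) ^ (p / 8) : ℤ) : ZMod p) := by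
    have hLu : ((legendreSym p u : ℤ) : ZMod p) = (u : ZMod p) ^ (p / 2) := by
      have h := legendreSym.eq_pow p (u : ℤ)
      push_cast at h ⊢
      exact h
    have hLd : ((legendreSym p (2 * v) : ℤ) : ZMod p) = d ^ (p / 2) := by
      have h := legendreSym.eq_pow p ((2 * v : ℕ) : ℤ)
      push_cast at h ⊢
      rw [hd]
      exact_mod_cast h
    have hdpow : d ^ (p / 2) = 1 := by
      rw [← hLd, J2]; norm_num
    have hwpow : w ^ (p / 2) = (-1 : ZMod p) ^ (p / 8) := by
      rw [hk, pow_mul, hw4]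
    calc (m * w) ^ (p / 2)
        = (u : ZMod p) ^ (p / 2) * (d ^ (p / 2))⁻¹ * w ^ (p / 2) := by
          rw [hm]; rw [mul_pow, mul_pow, inv_pow]
      _ = (u : ZMod p) ^ (p / 2) * 1 * (-1 : ZMod p) ^ (p / 8) := by
          rw [hdpow, hwpow]; norm_num
      _ = ((ZMod.χ₈ u * (-1) ^ (p / 8) : ℤ) : ZMod p) := by
          rw [← hLu, J1]; push_cast; ring
  -- arithmetic: ZMod.χ₈ u * (-1)^(p/8) = (-1)^v
  have harith : (ZMod.χ₈ u * (-1) ^ (p / 8) : ℤ) = (-1 : ℤ) ^ v := by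
    -- u² = 8*kk + 1
    obtain ⟨kk, hkk⟩ := Nat.even_mul_succ_self (u / 2)
    have hkk' : u / 2 * (u / 2) + u / 2 = 2 * kk := by
      have h : u / 2 * (u / 2 + 1) = u / 2 * (u / 2) + u / 2 := by ring
      omega
    have hu2exp : u ^ 2 = 8 * kk + 1 := by
      have h1 : u = 2 * (u / 2) + 1 := by omega
      have h2 : u ^ 2 = 4 * (u / 2 * (u / 2) + u / 2) + 1 := by
        calc u ^ 2 = (2 * (u / 2) + 1) ^ 2 := by rw [← h1]
          _ = 4 * (u / 2 * (u / 2) + u / 2) + 1 := by ring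
      omega
    have hkeq : p / 8 = (u ^ 2 - 1) / 8 + v ^ 2 := by omega
    have hv2 : (-1 : ℤ) ^ (v ^ 2) = (-1 : ℤ) ^ v := by
      rcases Nat.even_or_odd v with hv | hv
      · rw [(Nat.even_pow.mpr ⟨hv, two_ne_zero⟩).neg_one_pow, hv.neg_one_pow]
      · rw [(hv.pow).neg_one_pow, hv.neg_one_pow]
    have hχ : (ZMod.χ₈ u : ℤ) = (-1 : ℤ) ^ ((u ^ 2 - 1) / 8) := by
      have hcase : u % 8 = 1 ∨ u % 8 = 3 ∨ u % 8 = 5 ∨ u % 8 = 7 := by omega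
      have hu' : u = 8 * (u / 8) + u % 8 := (Nat.div_add_mod u 8).symm
      rcases hcase with hr | hr | hr | hr
      · have hq : u = 8 * (u / 8) + 1 := by omega
        have hexp : u ^ 2 = 8 * (8 * (u / 8 * (u / 8)) + 2 * (u / 8)) + 1 := by
          calc u ^ 2 = (8 * (u / 8) + 1) ^ 2 := by rw [← hq]
            _ = _ := by ring
        have hev : Even ((u ^ 2 - 1) / 8) := by
          rw [Nat.even_iff]; omega
        rw [ZMod.χ₈_nat_mod_eight, hr, hev.neg_one_pow]; decide
      · have hq : u = 8 * (u / 8) + 3 := by omega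
        have hexp : u ^ 2 = 8 * (8 * (u / 8 * (u / 8)) + 6 * (u / 8) + 1) + 1 := by
          calc u ^ 2 = (8 * (u / 8) + 3) ^ 2 := by rw [← hq]
            _ = _ := by ring
        have hev : Odd ((u ^ 2 - 1) / 8) := by
          rw [Nat.odd_iff]; omega
        rw [ZMod.χ₈_nat_mod_eight, hr, hev.neg_one_pow]; decide
      · have hq : u = 8 * (u / 8) + 5 := by omega
        have hexp : u ^ 2 = 8 * (8 * (u / 8 * (u / 8)) + 10 * (u / 8) + 3) + 1 := by
          calc u ^ 2 = (8 * (u / 8) + 5) ^ 2 := by rw [← hq]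
            _ = _ := by ring
        have hev : Odd ((u ^ 2 - 1) / 8) := by
          rw [Nat.odd_iff]; omega
        rw [ZMod.χ₈_nat_mod_eight, hr, hev.neg_one_pow]; decide
      · have hq : u = 8 * (u / 8) + 7 := by omega
        have hexp : u ^ 2 = 8 * (8 * (u / 8 * (u / 8)) + 14 * (u / 8) + 6) + 1 := by
          calc u ^ 2 = (8 * (u / 8) + 7) ^ 2 := by rw [← hq]
            _ = _ := by ring
        have hev : Even ((u ^ 2 - 1) / 8) := by
          rw [Nat.even_iff]; omega
        rw [ZMod.χ₈_nat_mod_eight, hr, hev.neg_one_pow]; decide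
    rw [hχ, hkeq, pow_add, hv2, ← mul_assoc, ← pow_add]
    have : Even ((u ^ 2 - 1) / 8 + (u ^ 2 - 1) / 8) := ⟨(u ^ 2 - 1) / 8, by ring⟩
    rw [this.neg_one_pow, one_mul]
  rw [step1, heuler, hpow, harith]
  constructor
  · intro h
    by_contra hodd
    rw [Nat.not_even_iff_odd] at hodd
    rw [hodd.neg_one_pow] at h
    push_cast at h
    have : (2 : ZMod p) = 0 := by linear_combination -h
    exact h2F this
  · intro h
    rw [h.neg_one_pow]
    norm_num

theorem barrucand_cohn (p : ℕ) (hp : p.Prime) (h8 : p % 8 = 1) :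
    (∃ z : ℤ, z ^ 8 ≡ -4 [ZMOD (p : ℤ)]) ↔
      ∃ x y : ℤ, (p : ℤ) = x ^ 2 + 32 * y ^ 2 := by
  obtain ⟨u, v, huv⟩ := rep_eight p hp h8
  constructor
  · intro hA
    obtain ⟨y, hy⟩ := (key p hp h8 u v huv).mp hA
    refine ⟨u, y, ?_⟩
    rw [huv, hy]
    push_cast
    ring
  · rintro ⟨x, y, hxy⟩
    have h1 : p = x.natAbs ^ 2 + 8 * (2 * y.natAbs) ^ 2 := by
      have hx : |x| ^ 2 = x ^ 2 := sq_abs x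
      have hy : |y| ^ 2 = y ^ 2 := sq_abs y
      have h2 : (p : ℤ) = (x.natAbs : ℤ) ^ 2 + 8 * (2 * (y.natAbs : ℤ)) ^ 2 := by
        rw [hxy]; push_cast
        linear_combination -hx - 32 * hy
      exact_mod_cast h2
    exact (key p hp h8 _ _ h1).mpr ⟨y.natAbs, by ring⟩
end

section
/- Let q be a complex number with 0 < |q| < 1. Then J̄_{1,3}·j(q;−q³) = J_{6,12}·J̄_{2,6}. -/
set_option maxHeartbeats 1000000


open Complex

/-- The infinite q-Pochhammer symbol `(x;q)_∞ = ∏_{i ≥ 0} (1 - qⁱ x)`. -/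
noncomputable def qPochInf (x q : ℂ) : ℂ := ∏' i : ℕ, (1 - q ^ i * x)

/-- The theta function `j(x;q) = (x;q)_∞ (q/x;q)_∞ (q;q)_∞`. -/
noncomputable def jTheta (x q : ℂ) : ℂ :=
  qPochInf x q * qPochInf (q / x) q * qPochInf q q

lemma poch_term_ne_zero {t x : ℂ} (ht : ‖t‖ < 1) (hx : ‖x‖ < 1) (i : ℕ) :
    1 - t ^ i * x ≠ 0 := by
  have h : ‖t ^ i * x‖ < 1 := by
    rw [norm_mul, norm_pow]
    calc ‖t‖ ^ i * ‖x‖ ≤ 1 * ‖x‖ := by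
          gcongr
          exact pow_le_one₀ (norm_nonneg t) ht.le
      _ < 1 := by rwa [one_mul]
  intro h0
  rw [sub_eq_zero] at h0
  rw [← h0] at h
  simp at h

lemma poch_log_summable (t x : ℂ) (ht : ‖t‖ < 1) :
    Summable fun i : ℕ => Complex.log (1 - t ^ i * x) := by
  have hg : Summable fun i : ℕ => (3 / 2 : ℝ) * (‖x‖ * ‖t‖ ^ i) :=
    ((summable_geometric_of_lt_one (norm_nonneg t) ht).mul_left ‖x‖).mul_left _
  apply Summable.of_norm_bounded_eventually_nat hg
  have h0 : Filter.Tendsto (fun i : ℕ => ‖x‖ * ‖t‖ ^ i) Filter.atTop (nhds 0) := by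
    simpa using (tendsto_pow_atTop_nhds_zero_of_lt_one (norm_nonneg t) ht).const_mul ‖x‖
  filter_upwards [h0.eventually_le_const (by norm_num : (0 : ℝ) < 1 / 2)] with i hi
  have hz : ‖-(t ^ i * x)‖ ≤ 1 / 2 := by
    rwa [norm_neg, norm_mul, norm_pow, mul_comm]
  have := Complex.norm_log_one_add_half_le_self hz
  rw [show (1 : ℂ) + -(t ^ i * x) = 1 - t ^ i * x by ring] at this
  calc ‖Complex.log (1 - t ^ i * x)‖ ≤ 3 / 2 * ‖-(t ^ i * x)‖ := this
    _ = 3 / 2 * (‖x‖ * ‖t‖ ^ i) := by rw [norm_neg, norm_mul, norm_pow]; ring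

lemma poch_multipliable {t x : ℂ} (ht : ‖t‖ < 1) (hx : ‖x‖ < 1) :
    Multipliable fun i : ℕ => 1 - t ^ i * x :=
  Complex.multipliable_of_summable_log (poch_log_summable t x ht)

lemma qPochInf_ne_zero {t x : ℂ} (ht : ‖t‖ < 1) (hx : ‖x‖ < 1) : qPochInf x t ≠ 0 := by
  have h2 := Complex.cexp_tsum_eq_tprod (poch_term_ne_zero ht hx) (poch_log_summable t x ht)
  rw [qPochInf, ← h2]
  exact Complex.exp_ne_zero _

lemma pochMul {t x : ℂ} (ht : ‖t‖ < 1) (hx : ‖x‖ < 1) :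
    qPochInf x t * qPochInf (-x) t = qPochInf (x ^ 2) (t ^ 2) := by
  rw [qPochInf, qPochInf, qPochInf,
    ← Multipliable.tprod_mul (poch_multipliable ht hx) (poch_multipliable ht (by simpa using hx))]
  refine tprod_congr fun i => ?_
  have h : (t ^ 2) ^ i = t ^ i * t ^ i := by rw [← pow_mul, two_mul, pow_add]
  rw [h]; ring

lemma pochSplit {t x : ℂ} (ht : ‖t‖ < 1) (hx : ‖x‖ < 1) :
    qPochInf x t = qPochInf x (t ^ 2) * qPochInf (t * x) (t ^ 2) := by
  have ht2 : ‖t ^ 2‖ < 1 := by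
    rw [norm_pow]; exact pow_lt_one₀ (norm_nonneg t) ht two_ne_zero
  have htx : ‖t * x‖ < 1 := by
    rw [norm_mul]
    nlinarith [norm_nonneg t, norm_nonneg x]
  have he : Multipliable fun k : ℕ => 1 - t ^ (2 * k) * x :=
    (poch_multipliable ht2 hx).congr fun k => by rw [pow_mul]
  have ho : Multipliable fun k : ℕ => 1 - t ^ (2 * k + 1) * x :=
    (poch_multipliable ht2 htx).congr fun k => by rw [pow_add, pow_mul, pow_one]; ring
  rw [qPochInf, qPochInf, qPochInf, ← tprod_even_mul_odd he ho]
  congr 1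
  · exact tprod_congr fun k => by rw [pow_mul]
  · exact tprod_congr fun k => by rw [pow_add, pow_mul, pow_one]; ring

lemma pochSplit' {t x u y : ℂ} (ht : ‖t‖ < 1) (hx : ‖x‖ < 1) (hu : t ^ 2 = u)
    (hy : t * x = y) : qPochInf x t = qPochInf x u * qPochInf y u := by
  subst hu hy; exact pochSplit ht hx

lemma pochMul' {t x u y : ℂ} (ht : ‖t‖ < 1) (hx : ‖x‖ < 1) (hu : t ^ 2 = u)
    (hy : x ^ 2 = y) : qPochInf x t * qPochInf (-x) t = qPochInf y u := by
  subst hu hy; exact pochMul ht hx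

theorem threefield_id_three (q : ℂ) (hq0 : 0 < ‖q‖) (hq1 : ‖q‖ < 1) :
    jTheta (-q) (q ^ 3) * jTheta q (-(q ^ 3)) =
      jTheta (q ^ 6) (q ^ 12) * jTheta (-(q ^ 2)) (q ^ 6) := by
  have hq : ‖q‖ < 1 := hq1
  have hqn : q ≠ 0 := by
    intro h; simp [h] at hq0
  have hp : ∀ k : ℕ, k ≠ 0 → ‖q ^ k‖ < 1 := fun k hk => by
    rw [norm_pow]; exact pow_lt_one₀ (norm_nonneg q) hq hk
  have hp' : ∀ k : ℕ, k ≠ 0 → ‖-(q ^ k)‖ < 1 := fun k hk => by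
    rw [norm_neg]; exact hp k hk
  have hnq : ‖-q‖ < 1 := by rwa [norm_neg]
  have d1 : q ^ 3 / -q = -(q ^ 2) := by
    rw [div_eq_iff (neg_ne_zero.mpr hqn)]; ring
  have d2 : -(q ^ 3) / q = -(q ^ 2) := by
    rw [div_eq_iff hqn]; ring
  have d3 : q ^ 12 / q ^ 6 = q ^ 6 := by
    rw [div_eq_iff (pow_ne_zero 6 hqn)]; ring
  have d4 : q ^ 6 / -(q ^ 2) = -(q ^ 4) := by
    rw [div_eq_iff (neg_ne_zero.mpr (pow_ne_zero 2 hqn))]; ring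
  have e1 : qPochInf (-q) (q ^ 3) = qPochInf (-q) (q ^ 6) * qPochInf (-(q ^ 4)) (q ^ 6) :=
    pochSplit' (hp 3 (by norm_num)) hnq (by ring) (by ring)
  have e2 : qPochInf (-(q ^ 2)) (q ^ 3)
      = qPochInf (-(q ^ 2)) (q ^ 6) * qPochInf (-(q ^ 5)) (q ^ 6) :=
    pochSplit' (hp 3 (by norm_num)) (hp' 2 (by norm_num)) (by ring) (by ring)
  have e3 : qPochInf (q ^ 3) (q ^ 3) = qPochInf (q ^ 3) (q ^ 6) * qPochInf (q ^ 6) (q ^ 6) :=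
    pochSplit' (hp 3 (by norm_num)) (hp 3 (by norm_num)) (by ring) (by ring)
  have e4 : qPochInf q (-(q ^ 3)) = qPochInf q (q ^ 6) * qPochInf (-(q ^ 4)) (q ^ 6) :=
    pochSplit' (hp' 3 (by norm_num)) hq (by ring) (by ring)
  have e5 : qPochInf (-(q ^ 2)) (-(q ^ 3))
      = qPochInf (-(q ^ 2)) (q ^ 6) * qPochInf (q ^ 5) (q ^ 6) :=
    pochSplit' (hp' 3 (by norm_num)) (hp' 2 (by norm_num)) (by ring) (by ring)
  have e6 : qPochInf (-(q ^ 3)) (-(q ^ 3))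
      = qPochInf (-(q ^ 3)) (q ^ 6) * qPochInf (q ^ 6) (q ^ 6) :=
    pochSplit' (hp' 3 (by norm_num)) (hp' 3 (by norm_num)) (by ring) (by ring)
  have e7 : qPochInf (q ^ 6) (q ^ 6) = qPochInf (q ^ 6) (q ^ 12) * qPochInf (q ^ 12) (q ^ 12) :=
    pochSplit' (hp 6 (by norm_num)) (hp 6 (by norm_num)) (by ring) (by ring)
  have e8 : qPochInf (q ^ 2) (q ^ 6) = qPochInf (q ^ 2) (q ^ 12) * qPochInf (q ^ 8) (q ^ 12) :=
    pochSplit' (hp 6 (by norm_num)) (hp 2 (by norm_num)) (by ring) (by ring)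
  have e9 : qPochInf (q ^ 4) (q ^ 6) = qPochInf (q ^ 4) (q ^ 12) * qPochInf (q ^ 10) (q ^ 12) :=
    pochSplit' (hp 6 (by norm_num)) (hp 4 (by norm_num)) (by ring) (by ring)
  have m1 : qPochInf q (q ^ 6) * qPochInf (-q) (q ^ 6) = qPochInf (q ^ 2) (q ^ 12) :=
    pochMul' (hp 6 (by norm_num)) hq (by ring) (by ring)
  have m2 : qPochInf (q ^ 5) (q ^ 6) * qPochInf (-(q ^ 5)) (q ^ 6)
      = qPochInf (q ^ 10) (q ^ 12) :=
    pochMul' (hp 6 (by norm_num)) (hp 5 (by norm_num)) (by ring) (by ring)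
  have m3 : qPochInf (q ^ 3) (q ^ 6) * qPochInf (-(q ^ 3)) (q ^ 6)
      = qPochInf (q ^ 6) (q ^ 12) :=
    pochMul' (hp 6 (by norm_num)) (hp 3 (by norm_num)) (by ring) (by ring)
  have m4 : qPochInf (q ^ 2) (q ^ 6) * qPochInf (-(q ^ 2)) (q ^ 6)
      = qPochInf (q ^ 4) (q ^ 12) :=
    pochMul' (hp 6 (by norm_num)) (hp 2 (by norm_num)) (by ring) (by ring)
  have m5 : qPochInf (q ^ 4) (q ^ 6) * qPochInf (-(q ^ 4)) (q ^ 6)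
      = qPochInf (q ^ 8) (q ^ 12) :=
    pochMul' (hp 6 (by norm_num)) (hp 4 (by norm_num)) (by ring) (by ring)
  have hstar : qPochInf (q ^ 2) (q ^ 12) * qPochInf (q ^ 10) (q ^ 12) *
      qPochInf (-(q ^ 2)) (q ^ 6) * qPochInf (-(q ^ 4)) (q ^ 6) = 1 := by
    have hX : qPochInf (q ^ 2) (q ^ 6) * qPochInf (q ^ 4) (q ^ 6) ≠ 0 :=
      mul_ne_zero (qPochInf_ne_zero (hp 6 (by norm_num)) (hp 2 (by norm_num)))
        (qPochInf_ne_zero (hp 6 (by norm_num)) (hp 4 (by norm_num)))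
    apply mul_right_cancel₀ hX
    rw [one_mul]
    linear_combination
      (qPochInf (q ^ 2) (q ^ 12) * qPochInf (q ^ 10) (q ^ 12) *
        qPochInf (-(q ^ 4)) (q ^ 6) * qPochInf (q ^ 4) (q ^ 6)) * m4 +
      (qPochInf (q ^ 2) (q ^ 12) * qPochInf (q ^ 10) (q ^ 12) *
        qPochInf (q ^ 4) (q ^ 12)) * m5 -
      qPochInf (q ^ 4) (q ^ 6) * e8 -
      (qPochInf (q ^ 2) (q ^ 12) * qPochInf (q ^ 8) (q ^ 12)) * e9
  simp only [jTheta]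
  rw [d1, d2, d3, d4, e1, e2, e3, e4, e5, e6, e7]
  linear_combination
    (qPochInf (q ^ 5) (q ^ 6) * qPochInf (-(q ^ 5)) (q ^ 6) *
      qPochInf (q ^ 3) (q ^ 6) * qPochInf (-(q ^ 3)) (q ^ 6) *
      (qPochInf (-(q ^ 4)) (q ^ 6)) ^ 2 * (qPochInf (-(q ^ 2)) (q ^ 6)) ^ 2 *
      (qPochInf (q ^ 6) (q ^ 12)) ^ 2 * (qPochInf (q ^ 12) (q ^ 12)) ^ 2) * m1 +
    (qPochInf (q ^ 2) (q ^ 12) * qPochInf (q ^ 3) (q ^ 6) * qPochInf (-(q ^ 3)) (q ^ 6) *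
      (qPochInf (-(q ^ 4)) (q ^ 6)) ^ 2 * (qPochInf (-(q ^ 2)) (q ^ 6)) ^ 2 *
      (qPochInf (q ^ 6) (q ^ 12)) ^ 2 * (qPochInf (q ^ 12) (q ^ 12)) ^ 2) * m2 +
    (qPochInf (q ^ 2) (q ^ 12) * qPochInf (q ^ 10) (q ^ 12) *
      (qPochInf (-(q ^ 4)) (q ^ 6)) ^ 2 * (qPochInf (-(q ^ 2)) (q ^ 6)) ^ 2 *
      (qPochInf (q ^ 6) (q ^ 12)) ^ 2 * (qPochInf (q ^ 12) (q ^ 12)) ^ 2) * m3 +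
    ((qPochInf (q ^ 6) (q ^ 12)) ^ 3 * (qPochInf (q ^ 12) (q ^ 12)) ^ 2 *
      qPochInf (-(q ^ 2)) (q ^ 6) * qPochInf (-(q ^ 4)) (q ^ 6)) * hstar
end
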